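/- Let X₁ and X₂ be independent real random variables, each with distribution function P[Xᵢ ≤ x] = (2−x)^{−1} for x < 1 (and = 1 for x ≥ 1). Then for every x < 2, P[X₁ + X₂ ≤ x] = 2/(4−x) + 2·log(3−x)/(4−x)². -/

import Mathlib

open MeasureTheory Set Filter Topology

lemma pareto_deriv {t : ℝ} (ht : t < 2) :
    HasDerivAt (fun s : ℝ => (2 - s)⁻¹) (((2 - t) ^ 2)⁻¹) t := by
  have h : HasDerivAt (fun s : ℝ => 2 - s) (-1) t := (hasDerivAt_id t).const_sub 2
  have h2 : (2 - t) ≠ 0 := by intro h0; linarith [sub_eq_zero.mp h0]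
  have := h.inv h2
  refine this.congr_deriv ?_
  field_simp

lemma pareto_tendsto : Tendsto (fun t : ℝ => (2 - t)⁻¹) atBot (𝓝 0) := by
  have h : Tendsto (fun t : ℝ => 2 - t) atBot atTop := by
    have : Tendsto (fun t : ℝ => -t) atBot atTop := tendsto_neg_atBot_atTop
    simpa [sub_eq_add_neg] using tendsto_atTop_add_const_left atBot 2 this
  exact h.inv_tendsto_atTop

lemma pareto_integrableOn {b : ℝ} (hb : b < 2) :
    IntegrableOn (fun t : ℝ => ((2 - t) ^ 2)⁻¹) (Iic b) := by
  have hcont : ContinuousOn (fun t : ℝ => ((2 - t) ^ 2)⁻¹) (Iic b) := by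
    apply ContinuousOn.inv₀
    · fun_prop
    · intro t ht
      have h2 : (0:ℝ) < 2 - t := by have := lt_of_le_of_lt ht hb; linarith
      positivity
  apply integrableOn_Iic_of_intervalIntegral_norm_bounded ((2 : ℝ) - b)⁻¹ b
    (a := fun i : ℝ => i) (l := atBot) (μ := volume)
  · intro i
    exact ((hcont.mono Icc_subset_Iic_self).integrableOn_Icc).mono_set Ioc_subset_Icc_self
  · exact tendsto_id
  · filter_upwards [eventually_le_atBot b] with i hi
    have key : ∫ t in i..b, ((2 - t) ^ 2)⁻¹ = (2 - b)⁻¹ - (2 - i)⁻¹ := by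
      apply intervalIntegral.integral_eq_sub_of_hasDerivAt
      · intro t ht
        rw [uIcc_of_le hi] at ht
        exact pareto_deriv (lt_of_le_of_lt ht.2 hb)
      · apply ContinuousOn.intervalIntegrable
        apply hcont.mono
        rw [uIcc_of_le hi]
        exact fun y hy => hy.2
    have hnorm : ∫ t in i..b, ‖((2 - t) ^ 2)⁻¹‖ = ∫ t in i..b, ((2 - t) ^ 2)⁻¹ := by
      apply intervalIntegral.integral_congr
      intro t _
      exact Real.norm_of_nonneg (by positivity)
    rw [hnorm, key]
    have : (0:ℝ) ≤ (2 - i)⁻¹ := by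
      have h2 : (0:ℝ) < 2 - i := by have := lt_of_le_of_lt hi hb; linarith
      positivity
    linarith

lemma pareto_integral_Iic {b : ℝ} (hb : b < 2) :
    ∫ t in Iic b, ((2 - t) ^ 2)⁻¹ = (2 - b)⁻¹ := by
  have := integral_Iic_of_hasDerivAt_of_tendsto' (f := fun t : ℝ => (2 - t)⁻¹)
    (f' := fun t : ℝ => ((2 - t) ^ 2)⁻¹) (a := b)
    (fun t ht => pareto_deriv (lt_of_le_of_lt ht hb)) (pareto_integrableOn hb) pareto_tendsto
  simpa using this

noncomputable def paretoDensity : ℝ → ENNReal :=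
  Set.indicator (Set.Iio 1) (fun t => ENNReal.ofReal (((2 - t) ^ 2)⁻¹))

lemma measurable_paretoDensity : Measurable paretoDensity := by
  apply Measurable.indicator _ measurableSet_Iio
  fun_prop

lemma paretoDensity_lintegral_Iic_lt {a : ℝ} (ha : a < 1) :
    ∫⁻ t in Iic a, paretoDensity t = ENNReal.ofReal ((2 - a)⁻¹) := by
  rw [paretoDensity, lintegral_indicator measurableSet_Iio,
    Measure.restrict_restrict measurableSet_Iio]
  have hinter : Iio (1:ℝ) ∩ Iic a = Iic a := by
    apply inter_eq_self_of_subset_right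
    intro t ht
    exact lt_of_le_of_lt ht ha
  rw [hinter, ← ofReal_integral_eq_lintegral_ofReal ((pareto_integrableOn (by linarith)))
    (Filter.Eventually.of_forall fun t => by positivity),
    pareto_integral_Iic (by linarith)]

lemma pareto_lintegral_base :
    ∫⁻ t in Iio (1:ℝ), ENNReal.ofReal (((2 - t) ^ 2)⁻¹) = 1 := by
  have h : (volume.restrict (Iio (1:ℝ))) = volume.restrict (Iic 1) :=
    Measure.restrict_congr_set Iio_ae_eq_Iic
  rw [h, ← ofReal_integral_eq_lintegral_ofReal (pareto_integrableOn one_lt_two)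
    (Filter.Eventually.of_forall fun t => by positivity),
    pareto_integral_Iic one_lt_two]
  norm_num

lemma paretoDensity_lintegral_Iic_ge {a : ℝ} (ha : 1 ≤ a) :
    ∫⁻ t in Iic a, paretoDensity t = 1 := by
  rw [paretoDensity, lintegral_indicator measurableSet_Iio,
    Measure.restrict_restrict measurableSet_Iio]
  have hinter : Iio (1:ℝ) ∩ Iic a = Iio 1 := by
    apply inter_eq_self_of_subset_left
    intro t ht
    exact le_trans (le_of_lt ht) ha
  rw [hinter]
  exact pareto_lintegral_base

noncomputable def paretoMeasure : Measure ℝ := volume.withDensity paretoDensity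

lemma paretoMeasure_Iic_lt {a : ℝ} (ha : a < 1) :
    paretoMeasure (Iic a) = ENNReal.ofReal ((2 - a)⁻¹) := by
  rw [paretoMeasure, withDensity_apply _ measurableSet_Iic]
  exact paretoDensity_lintegral_Iic_lt ha

lemma paretoMeasure_Iic_ge {a : ℝ} (ha : 1 ≤ a) :
    paretoMeasure (Iic a) = 1 := by
  rw [paretoMeasure, withDensity_apply _ measurableSet_Iic]
  exact paretoDensity_lintegral_Iic_ge ha

instance : IsProbabilityMeasure paretoMeasure := by
  constructor
  rw [paretoMeasure, withDensity_apply _ MeasurableSet.univ, Measure.restrict_univ,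
    paretoDensity, lintegral_indicator measurableSet_Iio]
  exact pareto_lintegral_base

lemma pareto_map_eq {Ω : Type*} [MeasurableSpace Ω] (μ : Measure Ω)
    [IsProbabilityMeasure μ] (X : Ω → ℝ) (h : Measurable X)
    (hcdf : ∀ x : ℝ, x < 1 → μ {ω | X ω ≤ x} = ENNReal.ofReal ((2 - x)⁻¹))
    (hcdf' : ∀ x : ℝ, 1 ≤ x → μ {ω | X ω ≤ x} = 1) :
    μ.map X = paretoMeasure := by
  haveI : IsProbabilityMeasure (μ.map X) := Measure.isProbabilityMeasure_map h.aemeasurable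
  apply Measure.ext_of_Iic
  intro a
  rw [Measure.map_apply h measurableSet_Iic]
  have hpre : X ⁻¹' Iic a = {ω | X ω ≤ a} := rfl
  rw [hpre]
  rcases lt_or_ge a 1 with ha | ha
  · rw [hcdf a ha, paretoMeasure_Iic_lt ha]
  · rw [hcdf' a ha, paretoMeasure_Iic_ge ha]

noncomputable def paretoF : ℝ → ℝ := fun t => if t < 1 then (2 - t)⁻¹ else 1

lemma paretoF_nonneg (t : ℝ) : 0 ≤ paretoF t := by
  rw [paretoF]
  split
  · next h => have : (0:ℝ) < 2 - t := by linarith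
              positivity
  · norm_num

lemma paretoF_le_one (t : ℝ) : paretoF t ≤ 1 := by
  rw [paretoF]
  split
  · next h =>
      have h1 : (1:ℝ) < 2 - t := by linarith
      rw [inv_le_one_iff₀]
      right; linarith
  · exact le_refl 1

lemma paretoMeasure_Iic (a : ℝ) : paretoMeasure (Iic a) = ENNReal.ofReal (paretoF a) := by
  rw [paretoF]
  split
  · next h => exact paretoMeasure_Iic_lt h
  · next h => rw [paretoMeasure_Iic_ge (le_of_not_gt h), ENNReal.ofReal_one]

lemma measurable_paretoF : Measurable paretoF := by
  apply Measurable.ite measurableSet_Iio <;> fun_prop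

lemma pareto_conv_deriv {x t : ℝ} (h1 : x - 1 ≤ t) (h2 : t ≤ 1) (hx : x < 2) :
    HasDerivAt (fun t => ((4 - x) ^ 2)⁻¹ * (Real.log (2 - x + t) - Real.log (2 - t))
        + (4 - x)⁻¹ * (2 - t)⁻¹)
      (((2 - t) ^ 2)⁻¹ * (2 - x + t)⁻¹) t := by
  have hs : (0:ℝ) < 2 - x + t := by linarith
  have hu : (0:ℝ) < 2 - t := by linarith
  have hc : (0:ℝ) < 4 - x := by linarith
  have d1 : HasDerivAt (fun t : ℝ => Real.log (2 - x + t)) ((2 - x + t)⁻¹) t := by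
    have : HasDerivAt (fun t : ℝ => 2 - x + t) 1 t := (hasDerivAt_id t).const_add (2 - x)
    simpa [one_div] using this.log (ne_of_gt hs)
  have d2 : HasDerivAt (fun t : ℝ => Real.log (2 - t)) (-(2 - t)⁻¹) t := by
    have : HasDerivAt (fun t : ℝ => 2 - t) (-1) t := (hasDerivAt_id t).const_sub 2
    have := this.log (ne_of_gt hu)
    convert this using 1
    field_simp
  have d3 := pareto_deriv (show t < 2 by linarith)
  have := (((d1.sub d2).const_mul (((4 - x) ^ 2)⁻¹)).add (d3.const_mul ((4 - x)⁻¹)))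
  refine this.congr_deriv ?_
  have h4 : (4:ℝ) - x = (2 - x + t) + (2 - t) := by ring
  field_simp
  ring

lemma pareto_conv_integrand_integrable {x : ℝ} :
    Integrable (fun a => (Set.indicator (Iio 1) (fun t : ℝ => ((2 - t) ^ 2)⁻¹) a)
      * paretoF (x - a)) := by
  have hind : Integrable (Set.indicator (Iio 1) (fun t : ℝ => ((2 - t) ^ 2)⁻¹)) := by
    rw [integrable_indicator_iff measurableSet_Iio]
    exact (pareto_integrableOn one_lt_two).mono_set Iio_subset_Iic_self
  apply hind.mono
  · apply AEStronglyMeasurable.mul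
    · exact hind.aestronglyMeasurable
    · exact (measurable_paretoF.comp (measurable_const.sub measurable_id)).aestronglyMeasurable
  · refine Filter.Eventually.of_forall fun a => ?_
    rw [Real.norm_eq_abs, Real.norm_eq_abs, abs_mul]
    have h1 : |paretoF (x - a)| ≤ 1 := by
      rw [abs_of_nonneg (paretoF_nonneg _)]; exact paretoF_le_one _
    calc |Set.indicator (Iio 1) (fun t : ℝ => ((2 - t) ^ 2)⁻¹) a| * |paretoF (x - a)|
        ≤ |Set.indicator (Iio 1) (fun t : ℝ => ((2 - t) ^ 2)⁻¹) a| * 1 :=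
          mul_le_mul_of_nonneg_left h1 (abs_nonneg _)
      _ = |Set.indicator (Iio 1) (fun t : ℝ => ((2 - t) ^ 2)⁻¹) a| := mul_one _

lemma pareto_conv_integral {x : ℝ} (hx : x < 2) :
    ∫ a, (Set.indicator (Iio 1) (fun t : ℝ => ((2 - t) ^ 2)⁻¹) a) * paretoF (x - a)
      = 2 / (4 - x) + 2 * Real.log (3 - x) / (4 - x) ^ 2 := by
  have hx1 : x - 1 < 1 := by linarith
  have h3x : (0:ℝ) < 3 - x := by linarith
  have h4x : (0:ℝ) < 4 - x := by linarith
  set g := fun a => (Set.indicator (Iio 1) (fun t : ℝ => ((2 - t) ^ 2)⁻¹) a) * paretoF (x - a)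
    with hg
  have hgint : Integrable g := pareto_conv_integrand_integrable
  have hsplit : ∫ a, g a = (∫ a in Iic (x-1), g a) + ∫ a in Ioi (x-1), g a := by
    rw [← setIntegral_union (Iic_disjoint_Ioi le_rfl) measurableSet_Ioi
      hgint.integrableOn hgint.integrableOn, Iic_union_Ioi, setIntegral_univ]
  -- first piece
  have hpiece1 : ∫ a in Iic (x-1), g a = (3 - x)⁻¹ := by
    have : ∀ a ∈ Iic (x-1), g a = ((2 - a) ^ 2)⁻¹ := by
      intro a ha
      simp only [mem_Iic] at ha
      have ha1 : a < 1 := lt_of_le_of_lt ha hx1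
      have hFa : paretoF (x - a) = 1 := by
        rw [paretoF, if_neg]; push_neg; linarith
      rw [hg]
      simp only [Set.indicator_of_mem (show a ∈ Iio (1:ℝ) from ha1), hFa, mul_one]
    rw [setIntegral_congr_fun measurableSet_Iic this, pareto_integral_Iic (by linarith)]
    ring_nf
  -- second piece
  have hpiece2 : ∫ a in Ioi (x-1), g a
      = 2 * Real.log (3 - x) / (4 - x) ^ 2 + (4 - x)⁻¹ - (4 - x)⁻¹ * (3 - x)⁻¹ := by
    have heq : ∀ a ∈ Ioi (x-1), g a
        = Set.indicator (Iio 1) (fun t : ℝ => ((2 - t) ^ 2)⁻¹ * (2 - x + t)⁻¹) a := by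
      intro a ha
      simp only [mem_Ioi] at ha
      have hFa : paretoF (x - a) = (2 - x + a)⁻¹ := by
        rw [paretoF, if_pos (by linarith)]
        congr 1; ring
      rw [hg]
      by_cases h1 : a < 1
      · simp only [Set.indicator_of_mem (show a ∈ Iio (1:ℝ) from h1), hFa]
      · simp [Set.indicator_of_notMem (show a ∉ Iio (1:ℝ) from h1)]
    rw [setIntegral_congr_fun measurableSet_Ioi heq,
      setIntegral_indicator measurableSet_Iio, Ioi_inter_Iio,
      ← integral_Ioc_eq_integral_Ioo, ← intervalIntegral.integral_of_le (by linarith : x - 1 ≤ 1)]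
    have hftc := intervalIntegral.integral_eq_sub_of_hasDerivAt
      (f := fun t => ((4 - x) ^ 2)⁻¹ * (Real.log (2 - x + t) - Real.log (2 - t))
        + (4 - x)⁻¹ * (2 - t)⁻¹)
      (f' := fun t => ((2 - t) ^ 2)⁻¹ * (2 - x + t)⁻¹)
      (a := x - 1) (b := 1)
      (fun t ht => by
        rw [uIcc_of_le (by linarith : x - 1 ≤ 1)] at ht
        exact pareto_conv_deriv ht.1 ht.2 hx)
      (by
        apply ContinuousOn.intervalIntegrable
        rw [uIcc_of_le (by linarith : x - 1 ≤ 1)]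
        apply ContinuousOn.mul
        · apply ContinuousOn.inv₀
          · fun_prop
          · intro t ht
            have : (0:ℝ) < 2 - t := by have := ht.2; linarith
            positivity
        · apply ContinuousOn.inv₀
          · fun_prop
          · intro t ht
            have := ht.1; intro h0; nlinarith [h0])
    rw [hftc]
    have e1 : (2:ℝ) - x + 1 = 3 - x := by ring
    have e2 : (2:ℝ) - x + (x - 1) = 1 := by ring
    have e3 : (2:ℝ) - (x - 1) = 3 - x := by ring
    beta_reduce
    have e4 : (2:ℝ) - 1 = 1 := by norm_num
    simp only [e1, e2, e3, e4, Real.log_one]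
    field_simp
    ring
  rw [hsplit, hpiece1, hpiece2]
  field_simp
  ring

/-- The distribution function of the sum of two independent Pareto-distributed
random variables with `P[Xᵢ ≤ x] = (2-x)⁻¹` for `x < 1`. -/
theorem pareto_sum_cdf {Ω : Type*} [MeasurableSpace Ω] (μ : Measure Ω)
    [IsProbabilityMeasure μ] (X₁ X₂ : Ω → ℝ) (h₁ : Measurable X₁) (h₂ : Measurable X₂)
    (hInd : ProbabilityTheory.IndepFun X₁ X₂ μ)
    (hcdf₁ : ∀ x : ℝ, x < 1 → μ {ω | X₁ ω ≤ x} = ENNReal.ofReal ((2 - x)⁻¹))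
    (hcdf₁' : ∀ x : ℝ, 1 ≤ x → μ {ω | X₁ ω ≤ x} = 1)
    (hcdf₂ : ∀ x : ℝ, x < 1 → μ {ω | X₂ ω ≤ x} = ENNReal.ofReal ((2 - x)⁻¹))
    (hcdf₂' : ∀ x : ℝ, 1 ≤ x → μ {ω | X₂ ω ≤ x} = 1) :
    ∀ x : ℝ, x < 2 → μ {ω | X₁ ω + X₂ ω ≤ x}
      = ENNReal.ofReal (2 / (4 - x) + 2 * Real.log (3 - x) / (4 - x) ^ 2) := by
  intro x hx
  have hmap1 := pareto_map_eq μ X₁ h₁ hcdf₁ hcdf₁'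
  have hmap2 := pareto_map_eq μ X₂ h₂ hcdf₂ hcdf₂'
  have hprod : μ.map (fun ω => (X₁ ω, X₂ ω)) = paretoMeasure.prod paretoMeasure := by
    exact ((ProbabilityTheory.indepFun_iff_map_prod_eq_prod_map_map h₁.aemeasurable
      h₂.aemeasurable).1 hInd).trans (by rw [hmap1, hmap2])
  have hs : MeasurableSet {p : ℝ × ℝ | p.1 + p.2 ≤ x} :=
    measurableSet_le (measurable_fst.add measurable_snd) measurable_const
  have hsets : {ω | X₁ ω + X₂ ω ≤ x}
      = (fun ω => (X₁ ω, X₂ ω)) ⁻¹' {p : ℝ × ℝ | p.1 + p.2 ≤ x} := rfl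
  rw [hsets, ← Measure.map_apply (h₁.prodMk h₂) hs, hprod, Measure.prod_apply hs]
  have hpre : ∀ a : ℝ, (Prod.mk a ⁻¹' {p : ℝ × ℝ | p.1 + p.2 ≤ x}) = Iic (x - a) := by
    intro a
    ext b
    simp only [mem_preimage, mem_setOf_eq, mem_Iic]
    constructor <;> intro h <;> linarith
  have hmeasg : Measurable fun a : ℝ => ENNReal.ofReal (paretoF (x - a)) := by
    apply ENNReal.measurable_ofReal.comp
    exact measurable_paretoF.comp (measurable_const.sub measurable_id)
  have hindnn : ∀ a : ℝ, 0 ≤ Set.indicator (Iio 1) (fun t : ℝ => ((2 - t) ^ 2)⁻¹) a :=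
    fun a => Set.indicator_nonneg (fun t _ => by positivity) a
  calc ∫⁻ a, paretoMeasure (Prod.mk a ⁻¹' {p : ℝ × ℝ | p.1 + p.2 ≤ x}) ∂paretoMeasure
      = ∫⁻ a, ENNReal.ofReal (paretoF (x - a)) ∂paretoMeasure := by
        refine lintegral_congr fun a => ?_
        rw [hpre a, paretoMeasure_Iic]
    _ = ∫⁻ a, paretoDensity a * ENNReal.ofReal (paretoF (x - a)) ∂volume := by
        rw [paretoMeasure, lintegral_withDensity_eq_lintegral_mul _ measurable_paretoDensity
          hmeasg]
        exact lintegral_congr fun a => by simp [Pi.mul_apply]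
    _ = ∫⁻ a, ENNReal.ofReal ((Set.indicator (Iio 1) (fun t : ℝ => ((2 - t) ^ 2)⁻¹) a)
          * paretoF (x - a)) ∂volume := by
        refine lintegral_congr fun a => ?_
        rw [ENNReal.ofReal_mul (hindnn a)]
        congr 1
        rw [paretoDensity]
        by_cases h : a ∈ Iio (1:ℝ)
        · rw [Set.indicator_of_mem h, Set.indicator_of_mem h]
        · rw [Set.indicator_of_notMem h, Set.indicator_of_notMem h, ENNReal.ofReal_zero]
    _ = ENNReal.ofReal (∫ a, (Set.indicator (Iio 1) (fun t : ℝ => ((2 - t) ^ 2)⁻¹) a)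
          * paretoF (x - a)) := by
        rw [← ofReal_integral_eq_lintegral_ofReal pareto_conv_integrand_integrable]
        exact Filter.Eventually.of_forall fun a => mul_nonneg (hindnn a) (paretoF_nonneg _)
    _ = ENNReal.ofReal (2 / (4 - x) + 2 * Real.log (3 - x) / (4 - x) ^ 2) := by
        rw [pareto_conv_integral hx]
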